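/- arXiv:1007.1333 — 2 statements merged into one kernel-verified Lean document; each statement's English description precedes it below -/
import Mathlib

section
/- Let G_{v₀} = (V, E) be a nice graph and let B be a deterministic Büchi automaton over V_♮ with L_B(B) = L(G_{v₀}). Then the set C = {v ∈ V | some v-state of B is in the accepting set} is a vertex cover of G, and the state type of B has cardinality at least 2·|V| + |C|. -/
/-- The run of the deterministic automaton `M` from state `q` on the infinite
word `x`. -/
def DFA.runFrom {α σ : Type*} (M : DFA α σ) (q : σ) (x : ℕ → α) : ℕ → σ
  | 0 => q
  | n + 1 => M.step (M.runFrom q x n) (x n)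

/-- The Büchi language of a deterministic automaton: the set of infinite words
whose run from the initial state visits the accepting set infinitely often. -/
def BuchiLang {α σ : Type*} (M : DFA α σ) : Set (ℕ → α) :=
  {x | {n | M.runFrom M.start x n ∈ M.accept}.Infinite}

/-- `w` is a finite word of the form `v₀^{i₀} v₁^{i₁} ⋯ v_n^{i_n}` where
`v₀ v₁ ⋯ v_n` is a path in `G` starting at the distinguished vertex `v₀`, with
`n ≥ 0`, `i₀ ≥ 0`, `i_j ≥ 1` for `1 ≤ j ≤ n`, and last vertex `v_n = u`. -/
def IsStutterPath {V : Type} (G : SimpleGraph V) (v₀ : V) (w : List V) (u : V) : Prop :=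
  ∃ (n : ℕ) (v : ℕ → V) (i : ℕ → ℕ),
    v 0 = v₀ ∧ (∀ j, j < n → G.Adj (v j) (v (j + 1))) ∧
    (∀ j, 1 ≤ j → j ≤ n → 1 ≤ i j) ∧ v n = u ∧
    w = ((List.range (n + 1)).map (fun j => List.replicate (i j) (v j))).flatten

/-- Trace-words: infinite words `v₀^{i₀} v₁^{i₁} v₂^{i₂} ⋯ ∈ V^ω` with `i₀ ≥ 0`,
`i_j ≥ 1` for `j ≥ 1`, along an infinite path `v₀ v₁ v₂ ⋯` of `G` starting at `v₀`.
The function `f` assigns to each position of the word the index of its block. -/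
def IsTraceWord {V : Type} (G : SimpleGraph V) (v₀ : V) (α : ℕ → V ⊕ Unit) : Prop :=
  ∃ (v : ℕ → V) (f : ℕ → ℕ),
    v 0 = v₀ ∧ (∀ j, G.Adj (v j) (v (j + 1))) ∧
    f 0 ≤ 1 ∧ (∀ n, f n ≤ f (n + 1) ∧ f (n + 1) ≤ f n + 1) ∧
    (∀ m, ∃ n, m ≤ f n) ∧ (∀ n, α n = Sum.inl (v (f n)))

/-- ♮-words: infinite words over `V ⊕ {♮}` (with `♮ = Sum.inr ()`) having a
prefix of the form `v₀^{i₀} v₁^{i₁} ⋯ v_n^{i_n} ♮ v_n`. -/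
def IsNaturalWord {V : Type} (G : SimpleGraph V) (v₀ : V) (α : ℕ → V ⊕ Unit) : Prop :=
  ∃ (w : List V) (u : V), IsStutterPath G v₀ w u ∧
    (∀ k : Fin w.length, α k = Sum.inl (w.get k)) ∧
    α w.length = Sum.inr () ∧ α (w.length + 1) = Sum.inl u

/-- The characteristic language of the nice graph `G` with initial vertex `v₀`. -/
def CharLang {V : Type} (G : SimpleGraph V) (v₀ : V) : Set (ℕ → V ⊕ Unit) :=
  {α | IsTraceWord G v₀ α ∨ IsNaturalWord G v₀ α}

/-- `q` is a `v`-state of `B`: it is reached from the initial state on some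
finite word `v₀^{i₀} v₁^{i₁} ⋯ v_n^{i_n} ∈ V^*` along a path of `G` ending in `v`. -/
def IsVState {V σ : Type} (G : SimpleGraph V) (v₀ : V) (B : DFA (V ⊕ Unit) σ)
    (v : V) (q : σ) : Prop :=
  ∃ w : List V, IsStutterPath G v₀ w v ∧ B.eval (w.map Sum.inl) = q

/-- `q` is a `v♮`-state of `B`: it is reached from some `v`-state upon reading `♮`. -/
def IsNatState {V σ : Type} (G : SimpleGraph V) (v₀ : V) (B : DFA (V ⊕ Unit) σ)
    (v : V) (q : σ) : Prop :=
  ∃ q', IsVState G v₀ B v q' ∧ q = B.step q' (Sum.inr ())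

section General
variable {A S : Type*}

/-- Extend a finite word by an infinite word. -/
def extW (l : List A) (γ : ℕ → A) : ℕ → A :=
  fun n => if h : n < l.length then l.get ⟨n, h⟩ else γ (n - l.length)

lemma extW_lt (l : List A) (γ : ℕ → A) {n : ℕ} (h : n < l.length) :
    extW l γ n = l.get ⟨n, h⟩ := dif_pos h

lemma extW_ge (l : List A) (γ : ℕ → A) {n : ℕ} (h : l.length ≤ n) :
    extW l γ n = γ (n - l.length) := dif_neg (by omega)

/-- Visiting the accepting set infinitely often from state `q`. -/
def AcceptsFrom (B : DFA A S) (q : S) (γ : ℕ → A) : Prop :=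
  {n | B.runFrom q γ n ∈ B.accept}.Infinite

lemma runFrom_add (B : DFA A S) (q : S) (γ : ℕ → A) (m : ℕ) :
    ∀ n, B.runFrom q γ (m + n) = B.runFrom (B.runFrom q γ m) (fun k => γ (m + k)) n
  | 0 => rfl
  | n + 1 => by
      show B.step (B.runFrom q γ (m + n)) (γ (m + n)) = _
      rw [runFrom_add B q γ m n]; rfl

lemma nat_set_infinite_iff (s : Set ℕ) : s.Infinite ↔ ∀ a, ∃ b ∈ s, a < b :=
  ⟨fun h => h.exists_gt, Set.infinite_of_forall_exists_gt⟩

lemma acceptsFrom_shift (B : DFA A S) (q : S) (γ : ℕ → A) (m : ℕ) :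
    AcceptsFrom B q γ ↔ AcceptsFrom B (B.runFrom q γ m) (fun k => γ (m + k)) := by
  unfold AcceptsFrom
  rw [nat_set_infinite_iff, nat_set_infinite_iff]
  constructor
  · intro h a
    obtain ⟨b, hb, hab⟩ := h (m + a)
    refine ⟨b - m, ?_, by omega⟩
    have : m + (b - m) = b := by omega
    simpa [Set.mem_setOf_eq, ← runFrom_add, this] using hb
  · intro h a
    obtain ⟨b, hb, hab⟩ := h a
    refine ⟨m + b, ?_, by omega⟩
    simpa [Set.mem_setOf_eq, runFrom_add] using hb

lemma runFrom_eq_evalFrom (B : DFA A S) (q : S) (γ : ℕ → A) :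
    ∀ n, B.runFrom q γ n = B.evalFrom q ((List.range n).map γ)
  | 0 => rfl
  | n + 1 => by
      show B.step (B.runFrom q γ n) (γ n) = _
      rw [runFrom_eq_evalFrom B q γ n, List.range_succ, List.map_append]
      simp [DFA.evalFrom]

lemma map_range_extW (l : List A) (γ : ℕ → A) :
    (List.range l.length).map (extW l γ) = l := by
  apply List.ext_get (by simp)
  intro i h1 h2
  simp only [List.get_eq_getElem, List.getElem_map, List.getElem_range]
  rw [extW_lt, List.get_eq_getElem]

lemma extW_shift (l : List A) (γ : ℕ → A) :
    (fun k => extW l γ (l.length + k)) = γ := by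
  funext k
  rw [extW_ge l γ (by omega)]
  congr 1
  omega

lemma acceptsFrom_extW (B : DFA A S) (q : S) (l : List A) (γ : ℕ → A) :
    AcceptsFrom B q (extW l γ) ↔ AcceptsFrom B (B.evalFrom q l) γ := by
  rw [acceptsFrom_shift B q _ l.length, runFrom_eq_evalFrom, map_range_extW, extW_shift]

lemma discrete_ivt (f : ℕ → ℕ) (hstep : ∀ n, f (n + 1) ≤ f n + 1) (b : ℕ) :
    ∀ a m, a ≤ b → f a ≤ m → m ≤ f b → ∃ k, a ≤ k ∧ k ≤ b ∧ f k = m := by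
  induction b with
  | zero =>
    intro a m ha h1 h2
    have : a = 0 := by omega
    subst this
    exact ⟨0, le_rfl, le_rfl, by omega⟩
  | succ b ih =>
    intro a m ha h1 h2
    rcases Nat.lt_or_ge a (b + 1) with h | h
    · by_cases hm : m ≤ f b
      · obtain ⟨k, hk1, hk2, hk3⟩ := ih a m (by omega) h1 hm
        exact ⟨k, hk1, by omega, hk3⟩
      · exact ⟨b + 1, ha, le_rfl, by have := hstep b; omega⟩
    · have ha' : a = b + 1 := by omega
      subst ha'
      exact ⟨b + 1, le_rfl, le_rfl, by omega⟩

end General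

section Graph
variable {V : Type} (G : SimpleGraph V) (v₀ : V)

lemma flatten_singleton_blocks (v : ℕ → V) :
    ∀ l : List ℕ, (l.map fun j => [v j]).flatten = l.map v := by
  intro l
  induction l with
  | nil => rfl
  | cons a t ih => simp [ih]

lemma IsStutterPath.last_eq {w : List V} {u : V} (h : IsStutterPath G v₀ w u) :
    w.getLastD v₀ = u := by
  obtain ⟨n, v, i, hv0, hadj, hi, hvn, hw⟩ := h
  subst hvn
  subst hw
  cases n with
  | zero =>
    rw [show List.range 1 = [0] from rfl]
    simp only [List.map_cons, List.map_nil, List.flatten_cons, List.flatten_nil,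
      List.append_nil]
    cases hi0 : i 0 with
    | zero => rw [List.replicate_zero]; exact hv0.symm ▸ rfl
    | succ k => rw [List.replicate_succ', List.getLastD_concat]
  | succ m =>
    have h1 : 1 ≤ i (m + 1) := hi (m + 1) (by omega) le_rfl
    obtain ⟨k, hk⟩ : ∃ k, i (m + 1) = k + 1 := ⟨i (m + 1) - 1, by omega⟩
    rw [List.range_succ, List.map_append, List.flatten_append]
    simp only [List.map_cons, List.map_nil, List.flatten_cons, List.flatten_nil,
      List.append_nil, hk, List.replicate_succ']
    rw [← List.append_assoc, List.getLastD_concat]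

lemma isStutterPath_range_map (v : ℕ → V) (m : ℕ) (hv0 : v 0 = v₀)
    (hadj : ∀ j, j < m → G.Adj (v j) (v (j + 1))) :
    IsStutterPath G v₀ ((List.range (m + 1)).map v) (v m) := by
  refine ⟨m, v, fun _ => 1, hv0, hadj, fun _ _ _ => le_rfl, rfl, ?_⟩
  have : (fun j => List.replicate 1 (v j)) = (fun j => [v j]) := by
    funext j; simp
  rw [this, flatten_singleton_blocks]

lemma isStutterPath_range_map_replicate (v : ℕ → V) (m k : ℕ) (hv0 : v 0 = v₀)
    (hadj : ∀ j, j < m → G.Adj (v j) (v (j + 1))) :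
    IsStutterPath G v₀ ((List.range (m + 1)).map v ++ List.replicate k (v m)) (v m) := by
  refine ⟨m, v, fun j => if j = m then k + 1 else 1, hv0, hadj,
    fun j h1 h2 => by dsimp only; split <;> omega, rfl, ?_⟩
  rw [List.range_succ, List.map_append, List.map_append, List.flatten_append]
  have h1 : ((List.range m).map fun j => List.replicate (if j = m then k + 1 else 1) (v j))
      = (List.range m).map fun j => [v j] := by
    apply List.map_congr_left
    intro j hj
    rw [List.mem_range] at hj
    rw [if_neg (by omega)]
    simp
  rw [h1, flatten_singleton_blocks]
  simp [List.replicate_succ]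

lemma range_map_eventually_const {P : ℕ → V} {v : V} {s : ℕ}
    (h : ∀ n, s ≤ n → P n = v) :
    ∀ t, (List.range (s + t)).map P = (List.range s).map P ++ List.replicate t v := by
  intro t
  induction t with
  | zero => simp
  | succ t ih =>
    show (List.range (s + t + 1)).map P = _
    rw [List.range_succ, List.map_append, ih]
    simp only [List.map_cons, List.map_nil]
    rw [h (s + t) (by omega), List.append_assoc, ← List.replicate_succ']

lemma natWord_mem {w : List V} {u : V} (hsp : IsStutterPath G v₀ w u) {α : ℕ → V ⊕ Unit}
    (hpre : ∀ k : Fin w.length, α k = Sum.inl (w.get k))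
    (hnat : α w.length = Sum.inr ()) (hloc : α (w.length + 1) = Sum.inl u) :
    α ∈ CharLang G v₀ :=
  Or.inr ⟨w, u, hsp, hpre, hnat, hloc⟩

lemma not_mem_charLang_of_nat_mismatch {w : List V} {u : V}
    (hsp : IsStutterPath G v₀ w u) {α : ℕ → V ⊕ Unit}
    (hpre : ∀ k : Fin w.length, α k = Sum.inl (w.get k))
    (hnat : α w.length = Sum.inr ())
    (hbad : α (w.length + 1) ≠ Sum.inl u) : α ∉ CharLang G v₀ := by
  rintro (⟨v, f, _, _, _, _, _, hα⟩ | ⟨w', u', hsp', hpre', hnat', hloc'⟩)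
  · rw [hα w.length] at hnat
    simp at hnat
  · have hlen : w'.length = w.length := by
      rcases lt_trichotomy w'.length w.length with h | h | h
      · have := hpre ⟨w'.length, h⟩
        rw [hnat'] at this
        simp at this
      · exact h
      · have := hpre' ⟨w.length, h⟩
        rw [hnat] at this
        simp at this
    have hww : w' = w := by
      apply List.ext_get hlen
      intro i hi1 hi2
      have e1 := hpre' ⟨i, hi1⟩
      have e2 := hpre ⟨i, hi2⟩
      rw [e1] at e2
      exact Sum.inl.inj e2
    subst hww
    have : u' = u := by
      rw [← IsStutterPath.last_eq G v₀ hsp', ← IsStutterPath.last_eq G v₀ hsp]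
    subst this
    exact hbad hloc'

lemma not_mem_charLang_of_eventually_const {α : ℕ → V ⊕ Unit} {x : V} {N : ℕ}
    (hleft : ∀ n, ∃ y, α n = Sum.inl y)
    (hconst : ∀ n, N ≤ n → α n = Sum.inl x) : α ∉ CharLang G v₀ := by
  rintro (⟨v, f, hv0, hadj, hf0, hstep, hub, hα⟩ | ⟨w', u', _, _, hnat', _⟩)
  · have hmono : Monotone f := monotone_nat_of_le_succ fun n => (hstep n).1
    have hval : ∀ k, N ≤ k → v (f k) = x := by
      intro k hk
      have h := (hα k).symm.trans (hconst k hk)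
      exact Sum.inl.inj h
    obtain ⟨n1, hn1⟩ := hub (f N + 1)
    have hfb : f N + 1 ≤ f (max N n1) := le_trans hn1 (hmono (le_max_right _ _))
    obtain ⟨k, hk1, hk2, hk3⟩ := discrete_ivt f (fun n => (hstep n).2) (max N n1) N (f N + 1)
      (le_max_left _ _) (by omega) hfb
    have h1 : v (f N) = x := hval N le_rfl
    have h2 : v (f N + 1) = x := by rw [← hk3]; exact hval k hk1
    have hxx := hadj (f N)
    rw [h1, h2] at hxx
    exact G.irrefl hxx
  · obtain ⟨y, hy⟩ := hleft w'.length
    rw [hy] at hnat'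
    simp at hnat'

end Graph

section Bridge
variable {V σ : Type} {G : SimpleGraph V} {v₀ : V} {B : DFA (V ⊕ Unit) σ}

lemma extW_map_inl_pre (w : List V) (γ : ℕ → V ⊕ Unit) (k : Fin w.length) :
    extW (w.map Sum.inl) γ k = Sum.inl (w.get k) := by
  have hk : (k : ℕ) < (w.map (Sum.inl : V → V ⊕ Unit)).length := by simp
  rw [extW_lt _ _ hk]
  simp

lemma extW_map_inl_post (w : List V) (γ : ℕ → V ⊕ Unit) (t : ℕ) :
    extW (w.map Sum.inl) γ (w.length + t) = γ t := by
  rw [extW_ge _ _ (by simp)]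
  simp

lemma extW_map_inl_post0 (w : List V) (γ : ℕ → V ⊕ Unit) :
    extW (w.map Sum.inl) γ w.length = γ 0 := by
  simpa using extW_map_inl_post w γ 0

lemma acceptsFrom_iff_charLang (hL : BuchiLang B = CharLang G v₀)
    (l : List (V ⊕ Unit)) (γ : ℕ → V ⊕ Unit) :
    AcceptsFrom B (B.eval l) γ ↔ extW l γ ∈ CharLang G v₀ := by
  have h1 : AcceptsFrom B (B.eval l) γ ↔ AcceptsFrom B B.start (extW l γ) :=
    (acceptsFrom_extW B B.start l γ).symm
  have h2 : AcceptsFrom B B.start (extW l γ) ↔ extW l γ ∈ BuchiLang B := Iff.rfl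
  rw [h1, h2, hL]

/-- The test word `♮ v v v ⋯`. -/
def testWord (v : V) : ℕ → V ⊕ Unit := extW [Sum.inr ()] (fun _ => Sum.inl v)

lemma testWord_zero (v : V) : testWord v 0 = Sum.inr () := rfl

lemma testWord_succ (v : V) (n : ℕ) : testWord v (n + 1) = Sum.inl v := by
  unfold testWord
  rw [extW_ge _ _ (by simp)]

lemma testWord_one (v : V) : testWord v 1 = Sum.inl v := testWord_succ v 0

lemma vstate_accepts (hL : BuchiLang B = CharLang G v₀) {v : V} {q : σ}
    (hq : IsVState G v₀ B v q) : AcceptsFrom B q (testWord v) := by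
  obtain ⟨w, hsp, hw⟩ := hq
  rw [← hw, acceptsFrom_iff_charLang hL]
  apply natWord_mem G v₀ hsp
  · exact fun k => extW_map_inl_pre w _ k
  · rw [extW_map_inl_post0]
    rfl
  · rw [extW_map_inl_post w _ 1]
    exact testWord_one v

lemma vstate_rejects (hL : BuchiLang B = CharLang G v₀) {u : V} {q : σ}
    (hq : IsVState G v₀ B u q) (γ : ℕ → V ⊕ Unit)
    (h0 : γ 0 = Sum.inr ()) (h1 : γ 1 ≠ Sum.inl u) : ¬ AcceptsFrom B q γ := by
  obtain ⟨w, hsp, hw⟩ := hq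
  rw [← hw, acceptsFrom_iff_charLang hL]
  apply not_mem_charLang_of_nat_mismatch G v₀ hsp
  · exact fun k => extW_map_inl_pre w _ k
  · rw [extW_map_inl_post0, h0]
  · rw [extW_map_inl_post w _ 1]
    exact h1

lemma vstate_ne (hL : BuchiLang B = CharLang G v₀) {u v : V} {qu qv : σ}
    (hu : IsVState G v₀ B u qu) (hv : IsVState G v₀ B v qv) (huv : u ≠ v) : qu ≠ qv := by
  intro h
  subst h
  refine vstate_rejects hL hu (testWord v) (testWord_zero v) ?_ (vstate_accepts hL hv)
  rw [testWord_one]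
  simp [huv.symm]

lemma step_eq_evalFrom (q : σ) : B.step q (Sum.inr ()) = B.evalFrom q [Sum.inr ()] := rfl

lemma natstate_ne_vstate (hL : BuchiLang B = CharLang G v₀) {u v : V} {qu qv : σ}
    (hu : IsVState G v₀ B u qu) (hv : IsVState G v₀ B v qv) :
    B.step qu (Sum.inr ()) ≠ qv := by
  intro h
  have hacc : AcceptsFrom B (B.step qu (Sum.inr ())) (testWord v) :=
    h ▸ vstate_accepts hL hv
  rw [step_eq_evalFrom, ← acceptsFrom_extW] at hacc
  refine vstate_rejects hL hu _ rfl ?_ hacc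
  have h1 : extW [Sum.inr ()] (testWord v) 1 = Sum.inr () := by
    rw [extW_ge _ _ (by simp)]
    rfl
  rw [h1]
  simp

lemma natstate_ne_natstate (hL : BuchiLang B = CharLang G v₀) {u v : V} {qu qv : σ}
    (hu : IsVState G v₀ B u qu) (hv : IsVState G v₀ B v qv) (huv : u ≠ v) :
    B.step qu (Sum.inr ()) ≠ B.step qv (Sum.inr ()) := by
  intro h
  have hacc : AcceptsFrom B (B.evalFrom qv [Sum.inr ()]) (fun _ => Sum.inl v) := by
    rw [← acceptsFrom_extW]
    exact vstate_accepts hL hv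
  rw [← step_eq_evalFrom, ← h, step_eq_evalFrom, ← acceptsFrom_extW] at hacc
  refine vstate_rejects hL hu _ rfl ?_ hacc
  have h1 : extW [Sum.inr ()] (fun _ => Sum.inl v) 1 = Sum.inl v := by
    rw [extW_ge _ _ (by simp)]
  rw [h1]
  simp [huv.symm]

end Bridge

section Main
variable {V σ : Type} {G : SimpleGraph V} {v₀ : V} {B : DFA (V ⊕ Unit) σ}

lemma exists_nonaccept_vstate (hconn : G.Connected)
    (hL : BuchiLang B = CharLang G v₀) (v : V) :
    ∃ q, IsVState G v₀ B v q ∧ q ∉ B.accept := by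
  obtain ⟨W⟩ := hconn.preconnected v₀ v
  have hP0 : W.getVert 0 = v₀ := W.getVert_zero
  have hPadj : ∀ j, j < W.length → G.Adj (W.getVert j) (W.getVert (j + 1)) :=
    fun j hj => W.adj_getVert_succ hj
  have hPconst : ∀ n, W.length ≤ n → W.getVert n = v := fun n hn => W.getVert_of_length_le hn
  have hnot : (fun n => Sum.inl (W.getVert n) : ℕ → V ⊕ Unit) ∉ CharLang G v₀ :=
    not_mem_charLang_of_eventually_const G v₀ (x := v) (N := W.length)
      (fun n => ⟨W.getVert n, rfl⟩) (fun n hn => by rw [hPconst n hn])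
  have hnotB : (fun n => Sum.inl (W.getVert n) : ℕ → V ⊕ Unit) ∉ BuchiLang B := by
    rw [hL]; exact hnot
  have hfin : {n | B.runFrom B.start (fun n => Sum.inl (W.getVert n)) n ∈ B.accept}.Finite :=
    Set.not_infinite.mp hnotB
  obtain ⟨n, hn1, hn2⟩ := hfin.infinite_compl.exists_gt W.length
  obtain ⟨t, ht⟩ : ∃ t, n = (W.length + 1) + t := ⟨n - (W.length + 1), by omega⟩
  subst ht
  refine ⟨B.runFrom B.start (fun n => Sum.inl (W.getVert n)) ((W.length + 1) + t),
    ⟨(List.range (W.length + 1)).map (fun n => W.getVert n) ++ List.replicate t v, ?_, ?_⟩, hn1⟩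
  · have h := isStutterPath_range_map_replicate G v₀ (fun n => W.getVert n) W.length t hP0 hPadj
    rwa [show W.getVert W.length = v from hPconst W.length le_rfl] at h
  · rw [runFrom_eq_evalFrom]
    have hlist : (List.range ((W.length + 1) + t)).map (fun n => (Sum.inl (W.getVert n) : V ⊕ Unit))
        = ((List.range (W.length + 1)).map (fun n => W.getVert n) ++ List.replicate t v).map
            Sum.inl := by
      have h1 : (List.range ((W.length + 1) + t)).map (fun n => (Sum.inl (W.getVert n) : V ⊕ Unit))
          = ((List.range ((W.length + 1) + t)).map (fun n => W.getVert n)).map Sum.inl := by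
        rw [List.map_map]; rfl
      rw [h1, range_map_eventually_const (s := W.length + 1)
        (fun n hn => hPconst n (by omega)) t, List.map_append, List.map_replicate]
    rw [hlist]
    rfl

/-- The path that follows `P` up to time `m` and then alternates between `a` and `b`. -/
def altFun {V : Type} (P : ℕ → V) (m : ℕ) (a b : V) : ℕ → V :=
  fun j => if j ≤ m then P j else if Odd (j - m) then b else a

lemma altFun_le {V : Type} {P : ℕ → V} {m j : ℕ} {a b : V} (h : j ≤ m) :
    altFun P m a b j = P j := if_pos h

lemma altFun_gt {V : Type} {P : ℕ → V} {m j : ℕ} {a b : V} (h : m < j) :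
    altFun P m a b j = if Odd (j - m) then b else a := if_neg (by omega)

lemma cover_edge (hconn : G.Connected) (hL : BuchiLang B = CharLang G v₀)
    {a b : V} (hab : G.Adj a b) :
    a ∈ {v : V | ∃ q : σ, IsVState G v₀ B v q ∧ q ∈ B.accept} ∨
    b ∈ {v : V | ∃ q : σ, IsVState G v₀ B v q ∧ q ∈ B.accept} := by
  obtain ⟨W⟩ := hconn.preconnected v₀ a
  have hlast : W.getVert W.length = a := W.getVert_length
  set vs : ℕ → V := altFun (fun n => W.getVert n) W.length a b with hvs
  have h0 : vs 0 = v₀ := by rw [hvs, altFun_le (Nat.zero_le _)]; exact W.getVert_zero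
  have hadj : ∀ j, G.Adj (vs j) (vs (j + 1)) := by
    intro j
    rcases lt_trichotomy j W.length with h | h | h
    · rw [hvs, altFun_le (by omega), altFun_le (by omega)]
      exact W.adj_getVert_succ h
    · have e1 : vs j = a := by rw [hvs, altFun_le (le_of_eq h), h]; exact hlast
      have e2 : vs (j + 1) = b := by
        rw [hvs, altFun_gt (by omega), if_pos (by rw [h, Nat.add_sub_cancel_left]; exact odd_one)]
      rw [e1, e2]
      exact hab
    · rw [hvs, altFun_gt (by omega), altFun_gt (by omega)]
      have hpar : Odd (j + 1 - W.length) ↔ ¬ Odd (j - W.length) := by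
        rw [show j + 1 - W.length = (j - W.length) + 1 by omega, Nat.odd_add_one]
      by_cases hodd : Odd (j - W.length)
      · rw [if_pos hodd, if_neg (fun hc => (hpar.mp hc) hodd)]
        exact hab.symm
      · rw [if_neg hodd, if_pos (hpar.mpr hodd)]
        exact hab
  have hmem : (fun n => Sum.inl (vs n) : ℕ → V ⊕ Unit) ∈ CharLang G v₀ :=
    Or.inl ⟨vs, id, h0, hadj, Nat.zero_le 1, fun n => ⟨Nat.le_succ n, le_rfl⟩,
      fun mm => ⟨mm, le_rfl⟩, fun n => rfl⟩
  have hB : (fun n => Sum.inl (vs n) : ℕ → V ⊕ Unit) ∈ BuchiLang B := by rw [hL]; exact hmem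
  have hinf : {k | B.runFrom B.start (fun n => Sum.inl (vs n)) k ∈ B.accept}.Infinite := hB
  obtain ⟨n, hn1, hn2⟩ := hinf.exists_gt W.length
  obtain ⟨t, ht⟩ : ∃ t, n = t + 1 := ⟨n - 1, by omega⟩
  subst ht
  have hq : IsVState G v₀ B (vs t) (B.runFrom B.start (fun n => Sum.inl (vs n)) (t + 1)) := by
    refine ⟨(List.range (t + 1)).map vs,
      isStutterPath_range_map G v₀ vs t h0 (fun j _ => hadj j), ?_⟩
    rw [runFrom_eq_evalFrom]
    have h1 : ((List.range (t + 1)).map vs).map Sum.inl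
        = (List.range (t + 1)).map (fun n => (Sum.inl (vs n) : V ⊕ Unit)) := by
      rw [List.map_map]; rfl
    rw [h1]
    rfl
  rcases eq_or_lt_of_le (show W.length ≤ t by omega) with h | h
  · left
    have hv : vs t = a := by rw [hvs, altFun_le (le_of_eq h.symm), ← h]; exact hlast
    exact ⟨_, hv ▸ hq, hn1⟩
  · by_cases hodd : Odd (t - W.length)
    · right
      have hv : vs t = b := by rw [hvs, altFun_gt h, if_pos hodd]
      exact ⟨_, hv ▸ hq, hn1⟩
    · left
      have hv : vs t = a := by rw [hvs, altFun_gt h, if_neg hodd]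
      exact ⟨_, hv ▸ hq, hn1⟩

end Main

theorem cover_and_state_lower_bound {V σ : Type} [Fintype V] [Fintype σ]
    (G : SimpleGraph V) (v₀ : V) (hconn : G.Connected) (hcard : 1 < Fintype.card V)
    (B : DFA (V ⊕ Unit) σ) (hL : BuchiLang B = CharLang G v₀) :
    (∀ a b : V, G.Adj a b →
        a ∈ {v : V | ∃ q : σ, IsVState G v₀ B v q ∧ q ∈ B.accept} ∨
        b ∈ {v : V | ∃ q : σ, IsVState G v₀ B v q ∧ q ∈ B.accept}) ∧
    2 * Fintype.card V + {v : V | ∃ q : σ, IsVState G v₀ B v q ∧ q ∈ B.accept}.ncard ≤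
      Fintype.card σ := by
  classical
  constructor
  · intro a b hab
    exact cover_edge hconn hL hab
  · have hex : ∀ v : V, ∃ q, IsVState G v₀ B v q ∧ q ∉ B.accept :=
      exists_nonaccept_vstate hconn hL
    choose q0 hq0 hq0n using hex
    have hCfin : {v : V | ∃ q : σ, IsVState G v₀ B v q ∧ q ∈ B.accept}.Finite :=
      Set.toFinite _
    have hex2 : ∀ v : V, ∃ q,
        v ∈ {v : V | ∃ q : σ, IsVState G v₀ B v q ∧ q ∈ B.accept} →
          IsVState G v₀ B v q ∧ q ∈ B.accept := by
      intro v
      by_cases h : v ∈ {v : V | ∃ q : σ, IsVState G v₀ B v q ∧ q ∈ B.accept}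
      · obtain ⟨q, hq⟩ := h
        exact ⟨q, fun _ => hq⟩
      · exact ⟨B.start, fun hc => absurd hc h⟩
    choose qa hqa using hex2
    set F1 : Finset σ := Finset.univ.image q0 with hF1
    set F2 : Finset σ := Finset.univ.image (fun v => B.step (q0 v) (Sum.inr ())) with hF2
    set F3 : Finset σ := hCfin.toFinset.image qa with hF3
    have hinj0 : Function.Injective q0 := by
      intro u v h
      by_contra hne
      exact vstate_ne hL (hq0 u) (hq0 v) hne h
    have hinj2 : Function.Injective (fun v => B.step (q0 v) (Sum.inr ())) := by
      intro u v h
      by_contra hne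
      exact natstate_ne_natstate hL (hq0 u) (hq0 v) hne h
    have hc1 : F1.card = Fintype.card V := by
      rw [hF1, Finset.card_image_of_injective _ hinj0, Finset.card_univ]
    have hc2 : F2.card = Fintype.card V := by
      rw [hF2, Finset.card_image_of_injective _ hinj2, Finset.card_univ]
    have hc3 : F3.card = {v : V | ∃ q : σ, IsVState G v₀ B v q ∧ q ∈ B.accept}.ncard := by
      rw [hF3, Set.ncard_eq_toFinset_card _ hCfin]
      apply Finset.card_image_of_injOn
      intro u hu v hv h
      simp only [Finset.mem_coe, Set.Finite.mem_toFinset] at hu hv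
      by_contra hne
      exact vstate_ne hL (hqa u hu).1 (hqa v hv).1 hne h
    have hd12 : Disjoint F1 F2 := by
      rw [Finset.disjoint_left]
      intro x hx1 hx2
      rw [hF1, Finset.mem_image] at hx1
      rw [hF2, Finset.mem_image] at hx2
      obtain ⟨u, -, hu⟩ := hx1
      obtain ⟨v, -, hv⟩ := hx2
      exact natstate_ne_vstate hL (hq0 v) (hq0 u) (hv.trans hu.symm)
    have hd3 : Disjoint (F1 ∪ F2) F3 := by
      rw [Finset.disjoint_left]
      intro x hx1 hx3
      rw [hF3, Finset.mem_image] at hx3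
      obtain ⟨w, hwmem, hw⟩ := hx3
      rw [Set.Finite.mem_toFinset] at hwmem
      rcases Finset.mem_union.mp hx1 with hx | hx
      · rw [hF1, Finset.mem_image] at hx
        obtain ⟨u, -, hu⟩ := hx
        by_cases huw : u = w
        · subst huw
          have heq : q0 u = qa u := hu.trans hw.symm
          exact hq0n u (heq ▸ (hqa u hwmem).2)
        · exact vstate_ne hL (hq0 u) (hqa w hwmem).1 huw (hu.trans hw.symm)
      · rw [hF2, Finset.mem_image] at hx
        obtain ⟨u, -, hu⟩ := hx
        exact natstate_ne_vstate hL (hq0 u) (hqa w hwmem).1 (hu.trans hw.symm)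
    have hle := Finset.card_le_univ (F1 ∪ F2 ∪ F3)
    rw [Finset.card_union_of_disjoint hd3, Finset.card_union_of_disjoint hd12,
      hc1, hc2, hc3] at hle
    omega
end

section
/- Let A = (Q, δ, q₀, F) be a deterministic automaton over a finite alphabet Σ, and define the product automaton A⊺A with state type Q × Q, transition function mapping ((a, b), σ) to (δ a σ, δ b σ), and set of final product states D = {(a, b) | (a ∈ F) ≠ (b ∈ F)}. Then for all states p, q ∈ Q the following are equivalent: (1) p and q are almost equivalent; (2) for every infinite word α : ℕ → Σ, the run of A⊺A on α starting at (p, q) visits D only finitely often; (3) no product state in D that lies on a cycle of A⊺A is reachable in A⊺A from (p, q). -/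
/-- State `p` of `M₁` and state `q` of `M₂` are almost equivalent: for every
infinite word, the runs from `p` and from `q` disagree on membership in the
accepting sets only at finitely many positions. -/
def AlmostEquiv {α σ₁ σ₂ : Type*} (M₁ : DFA α σ₁) (M₂ : DFA α σ₂)
    (p : σ₁) (q : σ₂) : Prop :=
  ∀ x : ℕ → α,
    {n : ℕ | (M₁.runFrom p x n ∈ M₁.accept) ≠ (M₂.runFrom q x n ∈ M₂.accept)}.Finite

/-- The product automaton `A⊺A` of `M` with itself, started at `(p, q)`, whose
final (product) states are the pairs on which the accepting status differs. -/
def prodAut {α σ : Type*} (M : DFA α σ) (p q : σ) : DFA α (σ × σ) where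
  step := fun s a => (M.step s.1 a, M.step s.2 a)
  start := (p, q)
  accept := {s | (s.1 ∈ M.accept) ≠ (s.2 ∈ M.accept)}

lemma runFrom_eq_evalFrom_s8 {α σ : Type*} (M : DFA α σ) (q : σ) (x : ℕ → α) (n : ℕ) :
    M.runFrom q x n = M.evalFrom q ((List.range n).map x) := by
  induction n with
  | zero => rfl
  | succ n ih =>
    rw [List.range_succ, List.map_append]
    simp [DFA.runFrom, ih, DFA.evalFrom, List.foldl_append]

lemma runFrom_add_s8 {α σ : Type*} (M : DFA α σ) (q : σ) (x : ℕ → α) (n m : ℕ) :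
    M.runFrom q x (n + m) = M.runFrom (M.runFrom q x n) (fun i => x (n + i)) m := by
  induction m with
  | zero => rfl
  | succ m ih => simp [DFA.runFrom, ← Nat.add_assoc, ih]

lemma prod_run {α σ : Type*} (M : DFA α σ) (p q a b : σ) (x : ℕ → α) (n : ℕ) :
    (prodAut M p q).runFrom (a, b) x n = (M.runFrom a x n, M.runFrom b x n) := by
  induction n with
  | zero => rfl
  | succ n ih => simp only [DFA.runFrom, ih]; rfl

theorem almostEquiv_iff_prod {α σ : Type} [Fintype α] [Fintype σ]
    (M : DFA α σ) (p q : σ) :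
    (AlmostEquiv M M p q ↔
      ∀ x : ℕ → α, {n : ℕ | (prodAut M p q).runFrom (p, q) x n ∈ (prodAut M p q).accept}.Finite) ∧
    ((∀ x : ℕ → α, {n : ℕ | (prodAut M p q).runFrom (p, q) x n ∈ (prodAut M p q).accept}.Finite) ↔
      ¬ ∃ s ∈ (prodAut M p q).accept,
        (∃ w : List α, (prodAut M p q).evalFrom (p, q) w = s) ∧
        (∃ w : List α, w ≠ [] ∧ (prodAut M p q).evalFrom s w = s)) := by
  constructor
  · unfold AlmostEquiv
    apply forall_congr' (fun x => ?_)
    have : {n : ℕ | (M.runFrom p x n ∈ M.accept) ≠ (M.runFrom q x n ∈ M.accept)} =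
        {n : ℕ | (prodAut M p q).runFrom (p, q) x n ∈ (prodAut M p q).accept} := by
      ext n
      simp only [Set.mem_setOf_eq, prod_run]
      simp [prodAut]
    rw [this]
  · constructor
    · -- finitely often everywhere → no reachable accepting cycle state
      intro hfin
      rintro ⟨s, hs, ⟨w₁, hw₁⟩, ⟨w, hwne, hw⟩⟩
      have hL : 0 < w.length := List.length_pos_iff.mpr hwne
      -- the infinite word: w₁ followed by w repeated
      set x : ℕ → α := fun i =>
        if h : i < w₁.length then w₁.get ⟨i, h⟩
        else w.get ⟨(i - w₁.length) % w.length, Nat.mod_lt _ hL⟩ with hx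
      have key : ∀ k, (prodAut M p q).runFrom (p, q) x (w₁.length + k * w.length) = s := by
        intro k
        induction k with
        | zero =>
          simp only [Nat.zero_mul, Nat.add_zero]
          rw [runFrom_eq_evalFrom_s8]
          have : (List.range w₁.length).map x = w₁ := by
            apply List.ext_get (by simp)
            intro i h1 h2
            simp only [List.get_eq_getElem, List.getElem_map, List.getElem_range]
            have hi : i < w₁.length := h2
            simp [hx, hi]
          rw [this, hw₁]
        | succ k ih =>
          have : w₁.length + (k + 1) * w.length = (w₁.length + k * w.length) + w.length := by ring
          rw [this, runFrom_add_s8, ih, runFrom_eq_evalFrom_s8]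
          have : (List.range w.length).map (fun i => x (w₁.length + k * w.length + i)) = w := by
            apply List.ext_get (by simp)
            intro i h1 h2
            simp only [List.get_eq_getElem, List.getElem_map, List.getElem_range]
            have hi : i < w.length := h2
            have hge : ¬ (w₁.length + k * w.length + i < w₁.length) := by omega
            have hmod : (w₁.length + k * w.length + i - w₁.length) % w.length = i := by
              rw [show w₁.length + k * w.length + i - w₁.length = i + k * w.length by omega,
                Nat.add_mul_mod_self_right, Nat.mod_eq_of_lt hi]
            simp [hx, hge, hmod]
          rw [this, hw]
      have hsub : Set.range (fun k => w₁.length + k * w.length) ⊆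
          {n : ℕ | (prodAut M p q).runFrom (p, q) x n ∈ (prodAut M p q).accept} := by
        rintro n ⟨k, rfl⟩
        simp only [Set.mem_setOf_eq, key k]
        exact hs
      have hinj : Function.Injective (fun k => w₁.length + k * w.length) := by
        intro a b hab
        simp only at hab
        exact Nat.eq_of_mul_eq_mul_right hL (by omega)
      exact (Set.infinite_range_of_injective hinj).mono hsub (hfin x)
    · -- no reachable accepting cycle state → finitely often
      intro hno x
      by_contra hinf
      have hinf : {n : ℕ | (prodAut M p q).runFrom (p, q) x n ∈ (prodAut M p q).accept}.Infinite := hinf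
      obtain ⟨n, hn, m, hm, hne, heq⟩ :=
        hinf.exists_ne_map_eq_of_mapsTo
          (f := fun n => (prodAut M p q).runFrom (p, q) x n)
          (Set.mapsTo_univ _ _) Set.finite_univ
      wlog hlt : n < m generalizing n m
      · exact this m hm n hn hne.symm heq.symm (by omega)
      apply hno
      refine ⟨(prodAut M p q).runFrom (p, q) x n, hn, ⟨(List.range n).map x, (runFrom_eq_evalFrom_s8 _ _ _ _).symm⟩,
        ⟨(List.range (m - n)).map (fun i => x (n + i)), by simp; omega, ?_⟩⟩
      rw [← runFrom_eq_evalFrom_s8, ← runFrom_add_s8]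
      have : n + (m - n) = m := by omega
      rw [this, heq]
end
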